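/- Let A be an algebra, σ a congruence on A, and U ⊆ A. Then the set Tw(A, U) of σ-twins of the identity on U is a normal subgroup of the group Π(A, U) of permutations of U realized by unary polynomials of A. -/
import Mathlib


/-- A purely functional first-order signature. -/
structure Signature where
  ops : Type
  arity : ops → ℕ

/-- An algebra for a signature: an interpretation of each operation symbol. -/
structure UAlg (σ : Signature) (A : Type) where
  interp : ∀ o : σ.ops, (Fin (σ.arity o) → A) → A

/-- Terms in `n` variables over a signature. -/
inductive Term (σ : Signature) (n : ℕ) : Type
  | var : Fin n → Term σ n
  | op : (o : σ.ops) → (Fin (σ.arity o) → Term σ n) → Term σ n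

/-- Evaluation of a term at a tuple. -/
def Term.eval {σ : Signature} {A : Type} (Alg : UAlg σ A) {n : ℕ} :
    Term σ n → (Fin n → A) → A
  | .var i, v => v i
  | .op o ts, v => Alg.interp o fun j => (ts j).eval Alg v

/-- A congruence: an equivalence relation compatible with all operations. -/
def IsCongruence {σ : Signature} {A : Type} (Alg : UAlg σ A) (r : A → A → Prop) : Prop :=
  Equivalence r ∧ ∀ (o : σ.ops) (x y : Fin (σ.arity o) → A),
    (∀ i, r (x i) (y i)) → r (Alg.interp o x) (Alg.interp o y)

/-- A `k`-ary polynomial operation: a term operation with parameters. -/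
def IsPolynomial {σ : Signature} {A : Type} (Alg : UAlg σ A) {k : ℕ}
    (f : (Fin k → A) → A) : Prop :=
  ∃ (n : ℕ) (t : Term σ (k + n)) (params : Fin n → A),
    ∀ x : Fin k → A, f x = t.eval Alg (Fin.append x params)

/-- A unary polynomial operation. -/
def IsUnaryPolynomial {σ : Signature} {A : Type} (Alg : UAlg σ A) (f : A → A) : Prop :=
  IsPolynomial Alg (k := 1) fun x => f (x 0)

/-- The term condition TermCond(α, β; γ). -/
def TermCond {σ : Signature} {A : Type} (Alg : UAlg σ A) (α β γ : A → A → Prop) : Prop :=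
  ∀ (n m : ℕ) (t : Term σ (n + m)) (a₁ a₂ : Fin n → A) (b₁ b₂ : Fin m → A),
    (∀ i, α (a₁ i) (a₂ i)) → (∀ i, β (b₁ i) (b₂ i)) →
    γ (t.eval Alg (Fin.append a₁ b₁)) (t.eval Alg (Fin.append a₁ b₂)) →
    γ (t.eval Alg (Fin.append a₂ b₁)) (t.eval Alg (Fin.append a₂ b₂))

/-- β is strongly abelian over γ. -/
def StronglyAbelianOver {σ : Signature} {A : Type} (Alg : UAlg σ A)
    (β γ : A → A → Prop) : Prop :=
  ∀ (n m : ℕ) (t : Term σ (n + m)) (a₁ a₂ : Fin n → A) (b₁ b₂ b₃ : Fin m → A),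
    (∀ i, β (a₁ i) (a₂ i)) → (∀ i, β (b₁ i) (b₂ i)) → (∀ i, β (b₂ i) (b₃ i)) →
    γ (t.eval Alg (Fin.append a₁ b₁)) (t.eval Alg (Fin.append a₂ b₂)) →
    γ (t.eval Alg (Fin.append a₁ b₃)) (t.eval Alg (Fin.append a₂ b₃))

/-- The least congruence containing a binary relation. -/
def congClosure {σ : Signature} {A : Type} (Alg : UAlg σ A) (R : A → A → Prop) :
    A → A → Prop :=
  fun a b => ∀ r, IsCongruence Alg r → (∀ x y, R x y → r x y) → r a b

/-- A subset closed under the operations. -/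
def IsSubalgebra {σ : Signature} {A : Type} (Alg : UAlg σ A) (s : Set A) : Prop :=
  ∀ (o : σ.ops) (x : Fin (σ.arity o) → A), (∀ j, x j ∈ s) → Alg.interp o x ∈ s

/-- The power algebra `A^I`. -/
def UAlg.pow {σ : Signature} {A : Type} (Alg : UAlg σ A) (I : Type) :
    UAlg σ (I → A) :=
  ⟨fun o x i => Alg.interp o fun j => x j i⟩

/-- The product of a family of algebras. -/
def UAlg.pi {σ : Signature} {ι : Type} {A : ι → Type} (Alg : ∀ i, UAlg σ (A i)) :
    UAlg σ (∀ i, A i) :=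
  ⟨fun o x i => (Alg i).interp o fun j => x j i⟩

/-- The binary product of two algebras. -/
def UAlg.prod2 {σ : Signature} {A B : Type} (AlgA : UAlg σ A) (AlgB : UAlg σ B) :
    UAlg σ (A × B) :=
  ⟨fun o x => (AlgA.interp o fun j => (x j).1, AlgB.interp o fun j => (x j).2)⟩

/-- The algebra structure on a subalgebra. -/
def UAlg.sub {σ : Signature} {A : Type} (Alg : UAlg σ A) (s : Set A)
    (hs : IsSubalgebra Alg s) : UAlg σ s :=
  ⟨fun o x => ⟨Alg.interp o fun j => (x j : A), hs o _ fun j => (x j).2⟩⟩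

/-- Homomorphisms of algebras. -/
def IsHom {σ : Signature} {A B : Type} (AlgA : UAlg σ A) (AlgB : UAlg σ B)
    (f : A → B) : Prop :=
  ∀ (o : σ.ops) (x : Fin (σ.arity o) → A), f (AlgA.interp o x) = AlgB.interp o (f ∘ x)

/-- An idempotent unary polynomial. -/
def IsIdempotentPoly {σ : Signature} {A : Type} (Alg : UAlg σ A) (e : A → A) : Prop :=
  IsUnaryPolynomial Alg e ∧ ∀ x, e (e x) = e x

/-- A (⊥, δ)-minimal set. -/
def IsMinimalSet {σ : Signature} {A : Type} (Alg : UAlg σ A) (δ : A → A → Prop)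
    (U : Set A) : Prop :=
  (∃ e, IsIdempotentPoly Alg e ∧ U = Set.range e ∧ ∃ a b, δ a b ∧ e a ≠ e b) ∧
  ∀ e', IsIdempotentPoly Alg e' → Set.range e' ⊆ U → (∃ a b, δ a b ∧ e' a ≠ e' b) →
    Set.range e' = U

/-- μ is an atom of the congruence lattice. -/
def IsAtomCong {σ : Signature} {A : Type} (Alg : UAlg σ A) (μ : A → A → Prop) : Prop :=
  IsCongruence Alg μ ∧ μ ≠ (fun a b => a = b) ∧
  ∀ θ, IsCongruence Alg θ → (∀ a b, θ a b → μ a b) → θ = (fun a b => a = b) ∨ θ = μ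

/-- A (⊥, μ)-trace in a minimal set U. -/
def IsTrace {A : Type} (μ : A → A → Prop) (U N : Set A) : Prop :=
  (∃ a ∈ U, N = {x ∈ U | μ x a}) ∧ ∃ x ∈ N, ∃ y ∈ N, x ≠ y

/-- The body of a minimal set: the union of its traces. -/
def Body {A : Type} (μ : A → A → Prop) (U : Set A) : Set A :=
  {x | ∃ N, IsTrace μ U N ∧ x ∈ N}

/-- Polynomial permutations of U (as functions A → A which are bijective on U). -/
def PolPermFun {σ : Signature} {A : Type} (Alg : UAlg σ A) (U : Set A) : Set (A → A) :=
  { p | IsUnaryPolynomial Alg p ∧ Set.BijOn p U U }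

/-- Subdirect irreducibility: there is a pair contained in every nontrivial congruence. -/
def IsSI {σ : Signature} {B : Type} (Alg : UAlg σ B) : Prop :=
  ∃ a b : B, a ≠ b ∧ ∀ θ, IsCongruence Alg θ → θ ≠ (fun x y => x = y) → θ a b

/-- The subalgebra generated by a set. -/
def genSub {σ : Signature} {B : Type} (Alg : UAlg σ B) (s : Set B) : Set B :=
  ⋂₀ {t | IsSubalgebra Alg t ∧ s ⊆ t}

/-- A strongly solvable congruence: connected to ⊥ by strongly abelian covers. -/
def IsStronglySolvable {σ : Signature} {A : Type} (Alg : UAlg σ A)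
    (s : A → A → Prop) : Prop :=
  ∃ (n : ℕ) (c : Fin (n + 1) → (A → A → Prop)),
    c 0 = (fun a b => a = b) ∧ c (Fin.last n) = s ∧
    (∀ i, IsCongruence Alg (c i)) ∧
    ∀ i : Fin n, (∀ a b, c i.castSucc a b → c i.succ a b) ∧
      StronglyAbelianOver Alg (c i.succ) (c i.castSucc)

/-- The set of n-ary term operations of an algebra. -/
def TermFun {σ : Signature} {A : Type} (Alg : UAlg σ A) (n : ℕ) :
    Set ((Fin n → A) → A) :=
  { g | ∃ t : Term σ n, g = fun v => t.eval Alg v }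

/-- The group of permutations of U realized by unary polynomials of A. -/
def PolPerm {σ : Signature} {A : Type} (Alg : UAlg σ A) (U : Set A) :
    Set (Equiv.Perm U) :=
  { f | ∃ p : A → A, IsUnaryPolynomial Alg p ∧ ∀ u : U, p (u : A) = ((f u : U) : A) }

/-- The σ-twins of the identity on U. -/
def TwinPerm {σ : Signature} {A : Type} (Alg : UAlg σ A) (σc : A → A → Prop)
    (U : Set A) : Set (Equiv.Perm U) :=
  { f | ∃ (n : ℕ) (t : Term σ (n + 1)) (d e : Fin n → A),
      (∀ i, σc (d i) (e i)) ∧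
      (∀ u : U, t.eval Alg (Fin.cons (u : A) e) = (u : A)) ∧
      (∀ u : U, t.eval Alg (Fin.cons (u : A) d) = ((f u : U) : A)) }

section Aux

variable {σ : Signature} {A : Type}

/-- Renaming of variables in a term. -/
def Term.rename {n m : ℕ} (ρ : Fin n → Fin m) : Term σ n → Term σ m
  | .var i => .var (ρ i)
  | .op o ts => .op o fun j => (ts j).rename ρ

lemma Term.eval_rename (Alg : UAlg σ A) {n m : ℕ} (ρ : Fin n → Fin m)
    (t : Term σ n) (v : Fin m → A) :
    (t.rename ρ).eval Alg v = t.eval Alg (v ∘ ρ) := by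
  induction t with
  | var i => rfl
  | op o ts ih => simp [Term.rename, Term.eval, ih]

/-- Substitution of terms for variables. -/
def Term.subst {n m : ℕ} (ρ : Fin n → Term σ m) : Term σ n → Term σ m
  | .var i => ρ i
  | .op o ts => .op o fun j => (ts j).subst ρ

lemma Term.eval_subst (Alg : UAlg σ A) {n m : ℕ} (ρ : Fin n → Term σ m)
    (t : Term σ n) (v : Fin m → A) :
    (t.subst ρ).eval Alg v = t.eval Alg (fun i => (ρ i).eval Alg v) := by
  induction t with
  | var i => rfl
  | op o ts ih => simp [Term.subst, Term.eval, ih]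

/-- A pair of total functions given by one term with `σc`-related parameter tuples. -/
def TwPair (Alg : UAlg σ A) (σc : A → A → Prop) (F G : A → A) : Prop :=
  ∃ (n : ℕ) (t : Term σ (n + 1)) (d e : Fin n → A),
    (∀ i, σc (d i) (e i)) ∧
    (∀ x, F x = t.eval Alg (Fin.cons x d)) ∧
    (∀ x, G x = t.eval Alg (Fin.cons x e))

lemma append_cast_eq_cons {n : ℕ} (x : Fin 1 → A) (c : Fin n → A) (i : Fin (n + 1)) :
    Fin.append x c (Fin.cast (Nat.add_comm n 1) i) = (Fin.cons (x 0) c : Fin (n+1) → A) i := by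
  refine Fin.cases ?_ (fun j => ?_) i
  · have h : Fin.cast (Nat.add_comm n 1) (0 : Fin (n + 1)) = Fin.castAdd n (0 : Fin 1) := by
      ext; simp
    rw [h, Fin.append_left]
    simp
  · have h : Fin.cast (Nat.add_comm n 1) (Fin.succ j) = Fin.natAdd 1 j := by
      ext; simp [Nat.add_comm]
    rw [h, Fin.append_right]
    simp

lemma cons_cast_eq_append {n : ℕ} (x : Fin 1 → A) (c : Fin n → A) (j : Fin (1 + n)) :
    (Fin.cons (x 0) c : Fin (n+1) → A) (Fin.cast (Nat.add_comm 1 n) j) = Fin.append x c j := by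
  have := append_cast_eq_cons x c (Fin.cast (Nat.add_comm 1 n) j)
  simpa using this.symm

lemma TwPair.isUnaryPolynomial {Alg : UAlg σ A} {σc : A → A → Prop} {F G : A → A}
    (h : TwPair Alg σc F G) : IsUnaryPolynomial Alg F := by
  obtain ⟨n, t, d, e, _, hF, _⟩ := h
  refine ⟨n, t.rename (Fin.cast (Nat.add_comm n 1)), d, fun x => ?_⟩
  show F (x 0) = _
  rw [hF (x 0), Term.eval_rename]
  congr 1
  funext i
  exact (append_cast_eq_cons x d i).symm

lemma TwPair.id (Alg : UAlg σ A) {σc : A → A → Prop} :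
    TwPair Alg σc id id :=
  ⟨0, .var 0, Fin.elim0, Fin.elim0, fun i => i.elim0, fun _ => rfl, fun _ => rfl⟩

lemma TwPair.of_poly {Alg : UAlg σ A} {σc : A → A → Prop} (hrefl : ∀ a, σc a a)
    {p : A → A} (hp : IsUnaryPolynomial Alg p) : TwPair Alg σc p p := by
  obtain ⟨n, t, c, hc⟩ := hp
  refine ⟨n, t.rename (Fin.cast (Nat.add_comm 1 n)), c, c, fun i => hrefl _,
    fun x => ?_, fun x => ?_⟩ <;>
  · rw [Term.eval_rename]
    have := hc (fun _ => x)
    simp only at this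
    rw [this]
    congr 1
    funext j
    exact (cons_cast_eq_append (fun _ => x) c j).symm

lemma TwPair.comp {Alg : UAlg σ A} {σc : A → A → Prop} {F₁ G₁ F₂ G₂ : A → A}
    (h₁ : TwPair Alg σc F₁ G₁) (h₂ : TwPair Alg σc F₂ G₂) :
    TwPair Alg σc (F₁ ∘ F₂) (G₁ ∘ G₂) := by
  obtain ⟨n₁, t₁, d₁, e₁, hde₁, hF₁, hG₁⟩ := h₁
  obtain ⟨n₂, t₂, d₂, e₂, hde₂, hF₂, hG₂⟩ := h₂
  set ι : Fin (n₂ + 1) → Fin ((n₂ + n₁) + 1) :=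
    Fin.cons 0 (fun j => (Fin.castAdd n₁ j).succ) with hι
  set ρ : Fin (n₁ + 1) → Term σ ((n₂ + n₁) + 1) :=
    Fin.cons (t₂.rename ι) (fun i => .var (Fin.natAdd n₂ i).succ) with hρ
  have key : ∀ (x : A) (d₁' : Fin n₁ → A) (d₂' : Fin n₂ → A),
      (t₁.subst ρ).eval Alg (Fin.cons x (Fin.append d₂' d₁')) =
        t₁.eval Alg (Fin.cons (t₂.eval Alg (Fin.cons x d₂')) d₁') := by
    intro x d₁' d₂'
    rw [Term.eval_subst]
    congr 1
    funext i
    refine Fin.cases ?_ (fun k => ?_) i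
    · simp only [hρ, Fin.cons_zero]
      rw [Term.eval_rename]
      congr 1
      funext j
      refine Fin.cases ?_ (fun l => ?_) j
      · simp [hι]
      · simp [hι, Fin.append_left]
    · simp [hρ, Term.eval, Fin.append_right]
  refine ⟨n₂ + n₁, t₁.subst ρ, Fin.append d₂ d₁, Fin.append e₂ e₁, ?_, fun x => ?_, fun x => ?_⟩
  · intro i
    refine Fin.addCases (fun j => ?_) (fun j => ?_) i
    · rw [Fin.append_left, Fin.append_left]; exact hde₂ j
    · rw [Fin.append_right, Fin.append_right]; exact hde₁ j
  · rw [key, ← hF₂, ← hF₁]; rfl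
  · rw [key, ← hG₂, ← hG₁]; rfl

end Aux

/-- The set of σ-twins of the identity on U is a normal subgroup of the
group of polynomial permutations of U. -/
theorem stmt_4 {σ : Signature} {A : Type} [Fintype A] (Alg : UAlg σ A)
    (σc : A → A → Prop) (hσ : IsCongruence Alg σc) (U : Set A) :
    TwinPerm Alg σc U ⊆ PolPerm Alg U ∧
    (1 : Equiv.Perm U) ∈ TwinPerm Alg σc U ∧
    (∀ f g : Equiv.Perm U, f ∈ TwinPerm Alg σc U → g ∈ TwinPerm Alg σc U →
      f * g ∈ TwinPerm Alg σc U) ∧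
    (∀ f : Equiv.Perm U, f ∈ TwinPerm Alg σc U → f⁻¹ ∈ TwinPerm Alg σc U) ∧
    (∀ f : Equiv.Perm U, f ∈ TwinPerm Alg σc U → ∀ g : Equiv.Perm U,
      g ∈ PolPerm Alg U → g * f * g⁻¹ ∈ TwinPerm Alg σc U) := by
  have hrefl : ∀ a, σc a a := hσ.1.refl
  have mem_iff : ∀ f : Equiv.Perm U, f ∈ TwinPerm Alg σc U ↔
      ∃ F G : A → A, TwPair Alg σc F G ∧ (∀ u : U, G u = u) ∧
        (∀ u : U, F u = ((f u : U) : A)) := by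
    intro f
    constructor
    · rintro ⟨n, t, d, e, hde, he, hd⟩
      exact ⟨fun x => t.eval Alg (Fin.cons x d), fun x => t.eval Alg (Fin.cons x e),
        ⟨n, t, d, e, hde, fun _ => rfl, fun _ => rfl⟩, he, hd⟩
    · rintro ⟨F, G, ⟨n, t, d, e, hde, hF, hG⟩, hGid, hFf⟩
      exact ⟨n, t, d, e, hde,
        fun u => by rw [← hG]; exact hGid u,
        fun u => by rw [← hF]; exact hFf u⟩
  have one_mem : (1 : Equiv.Perm U) ∈ TwinPerm Alg σc U := by
    rw [mem_iff]
    exact ⟨id, id, TwPair.id Alg, fun u => rfl, fun u => rfl⟩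
  have mul_mem : ∀ f g : Equiv.Perm U, f ∈ TwinPerm Alg σc U → g ∈ TwinPerm Alg σc U →
      f * g ∈ TwinPerm Alg σc U := by
    intro f g hf hg
    rw [mem_iff] at hf hg ⊢
    obtain ⟨F₁, G₁, hFG₁, hGid₁, hFf₁⟩ := hf
    obtain ⟨F₂, G₂, hFG₂, hGid₂, hFf₂⟩ := hg
    refine ⟨F₁ ∘ F₂, G₁ ∘ G₂, hFG₁.comp hFG₂, fun u => ?_, fun u => ?_⟩
    · show G₁ (G₂ u) = (u : A)
      rw [hGid₂ u, hGid₁ u]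
    · show F₁ (F₂ u) = _
      rw [hFf₂ u, hFf₁ (g u)]
      rfl
  have pow_mem : ∀ f : Equiv.Perm U, f ∈ TwinPerm Alg σc U → ∀ k : ℕ,
      f ^ k ∈ TwinPerm Alg σc U := by
    intro f hf k
    induction k with
    | zero => simpa using one_mem
    | succ k ih => rw [pow_succ]; exact mul_mem _ _ ih hf
  have inv_pow_eq : ∀ f : Equiv.Perm U, f⁻¹ = f ^ (orderOf f - 1) := by
    intro f
    have ho : 0 < orderOf f := orderOf_pos f
    have h1 : f ^ (orderOf f - 1) * f = 1 := by
      rw [← pow_succ, Nat.sub_add_cancel ho, pow_orderOf_eq_one]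
    exact (eq_inv_of_mul_eq_one_left h1).symm
  refine ⟨?_, one_mem, mul_mem, ?_, ?_⟩
  · intro f hf
    rw [mem_iff] at hf
    obtain ⟨F, G, hFG, hGid, hFf⟩ := hf
    exact ⟨F, hFG.isUnaryPolynomial, hFf⟩
  · intro f hf
    rw [inv_pow_eq]
    exact pow_mem f hf _
  · intro f hf g hg
    rw [mem_iff] at hf ⊢
    obtain ⟨F, G, hFG, hGid, hFf⟩ := hf
    obtain ⟨p, hp, hpg⟩ := hg
    have piter : ∀ (k : ℕ) (u : U), p^[k] (u : A) = (((g ^ k) u : U) : A) := by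
      intro k
      induction k with
      | zero => intro u; simp
      | succ k ih =>
        intro u
        rw [Function.iterate_succ_apply, hpg u, ih (g u)]
        congr 1
    have twiter : ∀ k : ℕ, TwPair Alg σc (p^[k]) (p^[k]) := by
      intro k
      induction k with
      | zero => simpa using TwPair.id Alg
      | succ k ih =>
        rw [Function.iterate_succ']
        exact (TwPair.of_poly hrefl hp).comp ih
    have hq : ∀ u : U, p^[orderOf g - 1] (u : A) = ((g⁻¹ u : U) : A) := by
      intro u
      rw [piter, inv_pow_eq g]
    refine ⟨p ∘ F ∘ p^[orderOf g - 1], p ∘ G ∘ p^[orderOf g - 1],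
      (TwPair.of_poly hrefl hp).comp (hFG.comp (twiter _)), fun u => ?_, fun u => ?_⟩
    · show p (G (p^[orderOf g - 1] (u : A))) = (u : A)
      rw [hq u, hGid (g⁻¹ u), hpg (g⁻¹ u)]
      simp
    · show p (F (p^[orderOf g - 1] (u : A))) = _
      rw [hq u, hFf (g⁻¹ u), hpg (f (g⁻¹ u))]
      simp [Equiv.Perm.mul_apply]
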